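/- Let R be a ring and n ≥ 1. If R is n-skew-Armendariz, then A_n is Abelian: every idempotent of A_n is central in A_n. -/

import Mathlib

/-- If `R` is `n`-skew-Armendariz (`n ≥ 1`), then
`A_n = AddMonoidAlgebra R (Fin n →₀ ℕ)` is Abelian: every idempotent of `A_n` is
central in `A_n`. -/
theorem addMonoidAlgebra_abelian_of_nSkewArmendariz (R : Type*) [Ring R] (n : ℕ)
    (hn : 1 ≤ n)
    (hSA : ∀ f g : AddMonoidAlgebra R (Fin n →₀ ℕ), f * g = 0 →
      ∀ m : Fin n →₀ ℕ, f.coeff 0 * g.coeff m = 0) :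
    ∀ e : AddMonoidAlgebra R (Fin n →₀ ℕ), e * e = e →
      ∀ f : AddMonoidAlgebra R (Fin n →₀ ℕ), e * f = f * e := by
  intro e he f
  set e0 : R := e.coeff 0 with he0
  have h1 : e * (1 - e) = 0 := by rw [mul_sub, mul_one, he, sub_self]
  have h2 : (1 - e) * e = 0 := by rw [sub_mul, one_mul, he, sub_self]
  have h1' := hSA e (1 - e) h1
  have h2' := hSA (1 - e) e h2
  have hone : ∀ m : Fin n →₀ ℕ, m ≠ 0 → (1 : AddMonoidAlgebra R (Fin n →₀ ℕ)).coeff m = 0 := by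
    intro m hm
    rw [AddMonoidAlgebra.one_def, AddMonoidAlgebra.coeff_single]
    exact Finsupp.single_eq_of_ne' (fun h => hm h.symm)
  have hone0 : (1 : AddMonoidAlgebra R (Fin n →₀ ℕ)).coeff 0 = 1 := by
    rw [AddMonoidAlgebra.one_def, AddMonoidAlgebra.coeff_single]; exact Finsupp.single_eq_same
  have hcoef : ∀ m : Fin n →₀ ℕ, m ≠ 0 → e.coeff m = 0 := by
    intro m hm
    have a1 := h1' m
    have a2 := h2' m
    rw [AddMonoidAlgebra.coeff_sub, Finsupp.sub_apply, hone m hm, zero_sub, mul_neg, neg_eq_zero] at a1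
    rw [AddMonoidAlgebra.coeff_sub, Finsupp.sub_apply, hone0, sub_mul, one_mul, he0.symm] at a2
    rw [a1, sub_zero] at a2
    exact a2
  have hid : e0 * e0 = e0 := by
    have a2 := h2' 0
    rw [AddMonoidAlgebra.coeff_sub, Finsupp.sub_apply, hone0, sub_mul, one_mul, ← he0] at a2
    exact (sub_eq_zero.mp a2).symm
  have heq : e = AddMonoidAlgebra.single 0 e0 := by
    ext m
    by_cases hm : m = 0
    · subst hm; rw [AddMonoidAlgebra.coeff_single, Finsupp.single_eq_same]
    · rw [hcoef m hm, AddMonoidAlgebra.coeff_single, Finsupp.single_eq_of_ne' (fun h => hm h.symm)]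
  have hcentral : ∀ a : R, e0 * a = a * e0 := by
    intro a
    set t : Fin n →₀ ℕ := Finsupp.single ⟨0, hn⟩ 1 with ht'
    have ht : t ≠ 0 := fun h => one_ne_zero (Finsupp.single_eq_zero.mp h)
    have key : ∀ u : R, u * u = u → u * a * (1 - u) = 0 := by
      intro u hu
      set c : R := u * a * (1 - u) with hc
      have huc : u * c = c := by rw [hc, ← mul_assoc, ← mul_assoc, hu]
      have h1u : (1 - u) * (1 - u) = 1 - u := by
        rw [mul_sub, mul_one, sub_mul, one_mul, hu, sub_self, sub_zero]
      have hcu : c * (1 - u) = c := by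
        rw [hc, mul_assoc (u * a), h1u]
      have h0u : (1 - u) * u = 0 := by rw [sub_mul, one_mul, hu, sub_self]
      have hcc : c * c = 0 := by
        have step : c * c = u * a * ((1 - u) * u) * (a * (1 - u)) := by
          simp [hc, mul_assoc]
        rw [step, h0u, mul_zero, zero_mul]
      set F : AddMonoidAlgebra R (Fin n →₀ ℕ) :=
        AddMonoidAlgebra.single 0 u - AddMonoidAlgebra.single t c with hF
      set G : AddMonoidAlgebra R (Fin n →₀ ℕ) :=
        AddMonoidAlgebra.single 0 (1 - u) + AddMonoidAlgebra.single t c with hG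
      have hFG : F * G = 0 := by
        rw [hF, hG, sub_mul, mul_add, mul_add]
        rw [AddMonoidAlgebra.single_mul_single, AddMonoidAlgebra.single_mul_single,
          AddMonoidAlgebra.single_mul_single, AddMonoidAlgebra.single_mul_single]
        rw [mul_sub, mul_one, hu, sub_self, huc, hcu, hcc]
        simp only [zero_add, add_zero, AddMonoidAlgebra.single_zero]
        abel
      have hkey := hSA F G hFG t
      have hF0 : F.coeff 0 = u := by
        rw [hF, AddMonoidAlgebra.coeff_sub, Finsupp.sub_apply, AddMonoidAlgebra.coeff_single,
          AddMonoidAlgebra.coeff_single, Finsupp.single_eq_same,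
          Finsupp.single_eq_of_ne' ht, sub_zero]
      have hGt : G.coeff t = c := by
        rw [hG, AddMonoidAlgebra.coeff_add, Finsupp.add_apply, AddMonoidAlgebra.coeff_single,
          AddMonoidAlgebra.coeff_single, Finsupp.single_eq_same,
          Finsupp.single_eq_of_ne' (fun h => ht h.symm), zero_add]
      rw [hF0, hGt, huc] at hkey
      exact hkey
    have k1 := key e0 hid
    have k2 := key (1 - e0)
      (by rw [mul_sub, mul_one, sub_mul, one_mul, hid, sub_self, sub_zero])
    rw [sub_sub_cancel] at k2
    rw [mul_sub, mul_one, sub_eq_zero] at k1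
    rw [sub_mul, one_mul, sub_mul, sub_eq_zero] at k2
    -- k1 : e0 * a = e0 * a * e0, k2 : a * e0 = e0 * a * e0
    rw [k1]
    exact k2.symm
  rw [heq]
  ext m
  rw [AddMonoidAlgebra.coeff_single_zero_mul, AddMonoidAlgebra.coeff_mul_single_zero]
  exact hcentral (f.coeff m)
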